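/- arXiv:math/0102193 — 5 statements merged into one kernel-verified Lean document; each statement's English description precedes it below -/
import Mathlib

section
/- For every integer n ≥ 2, −(π²)/(2n²(n−1)) ≤ (−1 + cos(π/n))/(n−1) ≤ −π²/(2n³). -/
open Real

lemma key_upper (n : ℕ) (hn : 2 ≤ n) :
    Real.cos (Real.pi / n) ≤ 1 - Real.pi ^ 2 / (2 * (n : ℝ) ^ 3) * ((n : ℝ) - 1) := by
  have hpi := Real.pi_pos
  have hpi2 := Real.pi_lt_d2
  rcases lt_or_ge n 4 with h4 | h4
  · interval_cases n
    · rw [show ((2:ℕ):ℝ) = 2 by norm_num, Real.cos_pi_div_two]; nlinarith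
    · rw [show (Real.pi / ((3:ℕ):ℝ)) = Real.pi / 3 by norm_num, Real.cos_pi_div_three]; nlinarith
  · {
    have hn4 : (4 : ℝ) ≤ (n : ℝ) := by exact_mod_cast h4
    have hn0 : (0 : ℝ) < (n : ℝ) := by linarith
    set x := Real.pi / n with hx
    have hx0 : 0 < x := by positivity
    have hxle : x ≤ 1 := by
      rw [hx, div_le_one hn0]; linarith
    have hb := Real.cos_bound (by rw [abs_of_pos hx0]; exact hxle)
    rw [abs_of_pos hx0] at hb
    have hb2 : Real.cos x ≤ 1 - x ^ 2 / 2 + x ^ 4 * (5 / 96) := by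
      have := abs_le.1 hb
      linarith [this.2]
    have hxsq : x ^ 2 * n = Real.pi ^ 2 / n := by
      rw [hx]; field_simp
    have h5 : 5 * (x ^ 2 * n) ≤ 48 := by
      rw [hxsq, ← mul_div_assoc, div_le_iff₀ hn0]
      nlinarith
    have heq : Real.pi ^ 2 / (2 * (n : ℝ) ^ 3) * ((n : ℝ) - 1)
        = x ^ 2 * ((n : ℝ) - 1) / (2 * n) := by
      have hne : (n : ℝ) ≠ 0 := ne_of_gt hn0
      rw [hx, div_pow]
      field_simp
    rw [heq]
    have h6 : x ^ 2 * ((n : ℝ) - 1) ≤ (x ^ 2 / 2 - x ^ 4 * (5 / 96)) * (2 * n) := by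
      nlinarith [sq_nonneg x, hx0, hn0]
    have h7 : x ^ 2 * ((n : ℝ) - 1) / (2 * n) ≤ x ^ 2 / 2 - x ^ 4 * (5 / 96) :=
      (div_le_iff₀ (by positivity)).mpr h6
    linarith
  }

theorem contraction_rate_bounds (n : ℕ) (hn : 2 ≤ n) :
    -(Real.pi ^ 2) / (2 * (n : ℝ) ^ 2 * ((n : ℝ) - 1)) ≤
      (-1 + Real.cos (Real.pi / n)) / ((n : ℝ) - 1) ∧
    (-1 + Real.cos (Real.pi / n)) / ((n : ℝ) - 1) ≤ -Real.pi ^ 2 / (2 * (n : ℝ) ^ 3) := by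
  have hn2 : (2 : ℝ) ≤ (n : ℝ) := by exact_mod_cast hn
  have hn1 : (0 : ℝ) < (n : ℝ) - 1 := by linarith
  have hn0 : (0 : ℝ) < (n : ℝ) := by linarith
  constructor
  · have hL : -(Real.pi ^ 2) / (2 * (n : ℝ) ^ 2 * ((n : ℝ) - 1))
        = (-(Real.pi ^ 2) / (2 * (n : ℝ) ^ 2)) / ((n : ℝ) - 1) := by
      rw [div_div]
    rw [hL, div_le_div_iff_of_pos_right hn1]
    have h := Real.one_sub_sq_div_two_le_cos (x := Real.pi / n)
    have : (Real.pi / n) ^ 2 / 2 = Real.pi ^ 2 / (2 * (n : ℝ) ^ 2) := by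
      field_simp
    rw [this] at h
    have : -(Real.pi ^ 2) / (2 * (n : ℝ) ^ 2) = -(Real.pi ^ 2 / (2 * (n : ℝ) ^ 2)) := by ring
    rw [this]
    linarith
  · rw [div_le_iff₀ hn1]
    have h := key_upper n hn
    have hd : (0:ℝ) < 2 * (n:ℝ)^3 := by positivity
    have : -Real.pi ^ 2 / (2 * (n : ℝ) ^ 3) * ((n : ℝ) - 1)
        = -(Real.pi ^ 2 / (2 * (n : ℝ) ^ 3) * ((n : ℝ) - 1)) := by ring
    rw [this]
    linarith
end

section
/- For integers n ≥ 1 and 0 ≤ j₁, k₁, j₂, k₂ < n with j₁ < k₁ and j₂ < k₂, the functions f_{j,k}(x,y) = cos(jπx/n)cos(kπy/n) − cos(jπy/n)cos(kπx/n) satisfy: the sum of f_{j₁,k₁}(x,y)·f_{j₂,k₂}(x,y) over half-integer points 1/2 ≤ x < y ≤ n−1/2 equals 0 if (j₁,k₁) ≠ (j₂,k₂), and equals (1 + [j₁=0])·n²/4 if (j₁,k₁) = (j₂,k₂). -/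
open Real Finset

lemma cosSum (n : ℕ) (hn : 1 ≤ n) (m : ℤ) (h : ¬((2*(n:ℤ)) ∣ m)) :
    ∑ i ∈ Finset.range n, Real.cos ((m:ℝ) * π * ((i:ℝ)+1/2) / n) = 0 := by
  have hn0 : (n:ℝ) ≠ 0 := by positivity
  set α : ℝ := (m:ℝ)*π/n with hα
  have hs : Real.sin (α/2) ≠ 0 := by
    intro hz
    rw [Real.sin_eq_zero_iff] at hz
    obtain ⟨k, hk⟩ := hz
    apply h
    have hπ : π ≠ 0 := Real.pi_ne_zero
    field_simp [hα] at hk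
    have h2 : ((k*((n:ℤ)*2) : ℤ):ℝ) * π = (m:ℝ) * π := by push_cast; rw [hα, eq_div_iff hn0] at hk; linarith [hk]
    have h3 : (k*((n:ℤ)*2) : ℤ) = m := by exact_mod_cast mul_right_cancel₀ hπ h2
    exact ⟨k, by rw [← h3]; ring⟩

  have key : ∀ i : ℕ, Real.cos ((m:ℝ)*π*((i:ℝ)+1/2)/n)
      = (Real.sin (α*((i:ℝ)+1)) - Real.sin (α*(i:ℝ))) / (2 * Real.sin (α/2)) := by
    intro i
    rw [Real.sin_sub_sin]
    have e1 : (α*((i:ℝ)+1) - α*(i:ℝ))/2 = α/2 := by ring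
    have e2 : (α*((i:ℝ)+1) + α*(i:ℝ))/2 = α*((i:ℝ)+1/2) := by ring
    rw [e1, e2]
    have e3 : (m:ℝ)*π*((i:ℝ)+1/2)/n = α*((i:ℝ)+1/2) := by rw [hα]; ring
    rw [e3]
    exact (mul_div_cancel_left₀ _ (mul_ne_zero two_ne_zero hs)).symm
  simp only [key]
  rw [← Finset.sum_div]
  have : ∑ i ∈ Finset.range n, (Real.sin (α*((i:ℝ)+1)) - Real.sin (α*(i:ℝ)))
      = Real.sin (α*(n:ℝ)) - Real.sin (α*(0:ℕ)) := by
    have := Finset.sum_range_sub (fun i : ℕ => Real.sin (α*(i:ℝ))) n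
    simpa [Nat.cast_add] using this
  rw [this]
  have : α*(n:ℝ) = (m:ℝ)*π := by rw [hα]; field_simp
  rw [this]
  simp [Real.sin_int_mul_pi]

lemma notDvd (n : ℕ) (m : ℤ) (hm : m ≠ 0) (hlo : -(2*(n:ℤ)) < m) (hhi : m < 2*(n:ℤ)) :
    ¬((2*(n:ℤ)) ∣ m) := by
  intro hd
  have h2 : (2*(n:ℤ)) ≤ |m| := Int.le_of_dvd (abs_pos.mpr hm) ((dvd_abs _ _).mpr hd)
  rcases abs_cases m with ⟨h,_⟩|⟨h,_⟩ <;> omega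

lemma Sval (n : ℕ) (hn : 1 ≤ n) (a b : ℕ) (ha : a < n) (hb : b < n) :
    ∑ i ∈ Finset.range n, Real.cos ((a:ℝ)*π*((i:ℝ)+1/2)/n) * Real.cos ((b:ℝ)*π*((i:ℝ)+1/2)/n)
      = if a = b then (if a = 0 then (n:ℝ) else (n:ℝ)/2) else 0 := by
  have hterm : ∀ i : ℕ, Real.cos ((a:ℝ)*π*((i:ℝ)+1/2)/n) * Real.cos ((b:ℝ)*π*((i:ℝ)+1/2)/n)
      = (Real.cos ((((a:ℤ)-b : ℤ):ℝ)*π*((i:ℝ)+1/2)/n) + Real.cos ((((a+b:ℕ) : ℤ):ℝ)*π*((i:ℝ)+1/2)/n))/2 := by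
    intro i
    have e1 : (((a:ℤ)-b : ℤ):ℝ)*π*((i:ℝ)+1/2)/n = (a:ℝ)*π*((i:ℝ)+1/2)/n - (b:ℝ)*π*((i:ℝ)+1/2)/n := by
      push_cast; ring
    have e2 : (((a+b:ℕ) : ℤ):ℝ)*π*((i:ℝ)+1/2)/n = (a:ℝ)*π*((i:ℝ)+1/2)/n + (b:ℝ)*π*((i:ℝ)+1/2)/n := by
      push_cast; ring
    rw [e1, e2, Real.cos_sub, Real.cos_add]
    ring
  simp only [hterm]
  rw [← Finset.sum_div, Finset.sum_add_distrib]
  by_cases hab : a = b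
  · subst hab
    simp only [if_pos rfl, sub_self]
    by_cases h0 : a = 0
    · subst h0
      simp
    · have h2 : ∑ i ∈ Finset.range n, Real.cos ((((a+a:ℕ) : ℤ):ℝ)*π*((i:ℝ)+1/2)/n) = 0 := by
        apply cosSum n hn
        apply notDvd n _ (by omega) (by push_cast; omega) (by push_cast; omega)
      have h1 : ∑ i ∈ Finset.range n, Real.cos (((0:ℤ):ℝ)*π*((i:ℝ)+1/2)/n) = (n:ℝ) := by
        simp
      rw [h1, h2]
      norm_num [h0]
  · rw [if_neg hab]
    have h1 : ∑ i ∈ Finset.range n, Real.cos ((((a:ℤ)-b : ℤ):ℝ)*π*((i:ℝ)+1/2)/n) = 0 := by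
      apply cosSum n hn
      apply notDvd n _ (by omega) (by omega) (by omega)
    have h2 : ∑ i ∈ Finset.range n, Real.cos ((((a+b:ℕ) : ℤ):ℝ)*π*((i:ℝ)+1/2)/n) = 0 := by
      apply cosSum n hn
      apply notDvd n _ (by omega) (by push_cast; omega) (by push_cast; omega)
    rw [h1, h2]
    ring

/-- The function `f_{j,k}(x,y) = cos(jπx/n)cos(kπy/n) − cos(jπy/n)cos(kπx/n)`. -/
noncomputable def triEig (n j k : ℕ) (x y : ℝ) : ℝ :=
  Real.cos (j * Real.pi * x / n) * Real.cos (k * Real.pi * y / n) -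
    Real.cos (j * Real.pi * y / n) * Real.cos (k * Real.pi * x / n)

theorem triEig_orthogonality (n : ℕ) (hn : 1 ≤ n)
    (j₁ k₁ j₂ k₂ : ℕ) (h₁ : j₁ < k₁) (h₁n : k₁ < n) (h₂ : j₂ < k₂) (h₂n : k₂ < n) :
    (∑ i ∈ Finset.range n, ∑ i' ∈ Finset.range n,
        if i < i' then
          triEig n j₁ k₁ ((i : ℝ) + 1 / 2) ((i' : ℝ) + 1 / 2) *
            triEig n j₂ k₂ ((i : ℝ) + 1 / 2) ((i' : ℝ) + 1 / 2)
        else 0) =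
      if (j₁, k₁) = (j₂, k₂) then (1 + (if j₁ = 0 then 1 else 0)) * (n : ℝ) ^ 2 / 4
      else 0 := by
  set c : ℕ → ℕ → ℝ := fun a i => Real.cos ((a:ℝ)*π*((i:ℝ)+1/2)/n) with hc
  set S : ℕ → ℕ → ℝ := fun a b => ∑ i ∈ Finset.range n, c a i * c b i with hS
  set g : ℕ → ℕ → ℝ := fun i i' =>
    (c j₁ i * c k₁ i' - c j₁ i' * c k₁ i) * (c j₂ i * c k₂ i' - c j₂ i' * c k₂ i) with hg
  have htri : ∀ i i' : ℕ,
      triEig n j₁ k₁ ((i : ℝ) + 1/2) ((i' : ℝ) + 1/2) *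
        triEig n j₂ k₂ ((i : ℝ) + 1/2) ((i' : ℝ) + 1/2) = g i i' := by
    intro i i'; rfl
  simp only [htri]
  -- step 1: double the triangular sum
  have hgsymm : ∀ i i', g i i' = g i' i := by intro i i'; simp only [hg]; ring
  have hdiag : ∀ i, g i i = 0 := by intro i; simp only [hg]; ring
  have h2T : (∑ i ∈ Finset.range n, ∑ i' ∈ Finset.range n, if i < i' then g i i' else 0) * 2
      = ∑ i ∈ Finset.range n, ∑ i' ∈ Finset.range n, g i i' := by
    have flip : (∑ i ∈ Finset.range n, ∑ i' ∈ Finset.range n, if i < i' then g i i' else 0)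
        = ∑ i ∈ Finset.range n, ∑ i' ∈ Finset.range n, if i' < i then g i i' else 0 := by
      rw [Finset.sum_comm]
      refine Finset.sum_congr rfl fun i _ => Finset.sum_congr rfl fun i' _ => ?_
      by_cases h : i' < i <;> simp [h, hgsymm i i']
    calc (∑ i ∈ Finset.range n, ∑ i' ∈ Finset.range n, if i < i' then g i i' else 0) * 2
        = (∑ i ∈ Finset.range n, ∑ i' ∈ Finset.range n, if i < i' then g i i' else 0)
          + (∑ i ∈ Finset.range n, ∑ i' ∈ Finset.range n, if i' < i then g i i' else 0) := by
          rw [← flip]; ring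
      _ = ∑ i ∈ Finset.range n, ∑ i' ∈ Finset.range n,
            ((if i < i' then g i i' else 0) + (if i' < i then g i i' else 0)) := by
          rw [← Finset.sum_add_distrib]
          refine Finset.sum_congr rfl fun i _ => ?_
          rw [← Finset.sum_add_distrib]
      _ = ∑ i ∈ Finset.range n, ∑ i' ∈ Finset.range n, g i i' := by
          refine Finset.sum_congr rfl fun i _ => Finset.sum_congr rfl fun i' _ => ?_
          rcases lt_trichotomy i i' with h | h | h
          · simp [h, not_lt.mpr h.le]
          · subst h; simp [hdiag i]
          · simp [h, not_lt.mpr h.le]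
  -- step 2: factor the full sum
  have hfull : ∑ i ∈ Finset.range n, ∑ i' ∈ Finset.range n, g i i'
      = S j₁ j₂ * S k₁ k₂ - S j₁ k₂ * S k₁ j₂ - S k₁ j₂ * S j₁ k₂ + S k₁ k₂ * S j₁ j₂ := by
    have expand : ∀ i i', g i i' =
        (c j₁ i * c j₂ i) * (c k₁ i' * c k₂ i') - (c j₁ i * c k₂ i) * (c k₁ i' * c j₂ i')
        - (c k₁ i * c j₂ i) * (c j₁ i' * c k₂ i') + (c k₁ i * c k₂ i) * (c j₁ i' * c j₂ i') := by
      intro i i'; simp only [hg]; ring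
    simp only [expand]
    simp only [Finset.sum_add_distrib, Finset.sum_sub_distrib, ← Finset.mul_sum,
      ← Finset.sum_mul, hS]
  -- step 3: evaluate
  have hSv : ∀ a b : ℕ, a < n → b < n →
      S a b = if a = b then (if a = 0 then (n:ℝ) else (n:ℝ)/2) else 0 := by
    intro a b ha hb
    exact Sval n hn a b ha hb
  have key : (∑ i ∈ Finset.range n, ∑ i' ∈ Finset.range n, if i < i' then g i i' else 0)
      = (S j₁ j₂ * S k₁ k₂ - S j₁ k₂ * S k₁ j₂) := by
    have := h2T
    rw [hfull] at this
    linarith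
  rw [key]
  by_cases heq : (j₁, k₁) = (j₂, k₂)
  · obtain ⟨e1, e2⟩ := Prod.ext_iff.mp heq
    dsimp at e1 e2
    subst e1; subst e2
    rw [if_pos rfl]
    have hk0 : k₁ ≠ 0 := by omega
    have hjk : j₁ ≠ k₁ := h₁.ne
    rw [hSv j₁ j₁ (h₁.trans h₁n) (h₁.trans h₁n), hSv k₁ k₁ h₁n h₁n,
      hSv j₁ k₁ (h₁.trans h₁n) h₁n, hSv k₁ j₁ h₁n (h₁.trans h₁n)]
    rw [if_pos rfl, if_pos rfl, if_neg hjk, if_neg (Ne.symm hjk), if_neg hk0]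
    by_cases h0 : j₁ = 0
    · rw [if_pos h0, if_pos h0]; ring
    · rw [if_neg h0, if_neg h0]; ring
  · rw [if_neg heq]
    have h12 : j₁ ≠ j₂ ∨ k₁ ≠ k₂ := by
      by_contra hcon
      push_neg at hcon
      exact heq (by rw [hcon.1, hcon.2])
    have hz1 : S j₁ j₂ * S k₁ k₂ = 0 := by
      rcases h12 with h | h
      · rw [hSv j₁ j₂ (h₁.trans h₁n) (h₂.trans h₂n), if_neg h, zero_mul]
      · rw [hSv k₁ k₂ h₁n h₂n, if_neg h, mul_zero]
    have hz2 : S j₁ k₂ * S k₁ j₂ = 0 := by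
      by_cases h : j₁ = k₂
      · have : k₁ ≠ j₂ := by omega
        rw [hSv k₁ j₂ h₁n (h₂.trans h₂n), if_neg this, mul_zero]
      · rw [hSv j₁ k₂ (h₁.trans h₁n) h₂n, if_neg h, zero_mul]
    rw [hz1, hz2, sub_zero]
end

section
/- For any integer n ≥ 2 and any integer j with 1 ≤ j ≤ n, cos(jπ/n) ≤ 1 − j·(1 − cos(π/n)). -/
open Real

lemma cos_add_le_key (a b : ℝ) (ha : 0 ≤ a) (hb : 0 ≤ b) (hab : a + b ≤ Real.pi) :
    Real.cos (a + b) ≤ Real.cos a + Real.cos b - 1 := by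
  have hs1 : Real.sin (a / 2) ≥ 0 := Real.sin_nonneg_of_nonneg_of_le_pi (by linarith) (by nlinarith [Real.pi_pos])
  have hs2 : Real.sin (b / 2) ≥ 0 := Real.sin_nonneg_of_nonneg_of_le_pi (by linarith) (by nlinarith [Real.pi_pos])
  have hc : Real.cos ((a + b) / 2) ≥ 0 := by
    apply Real.cos_nonneg_of_mem_Icc
    constructor <;> [linarith [Real.pi_pos]; linarith]
  have ea : Real.cos a = 1 - 2 * Real.sin (a / 2) ^ 2 := by
    have h := Real.cos_two_mul (a / 2)
    rw [show 2 * (a / 2) = a by ring] at h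
    linarith [Real.sin_sq_add_cos_sq (a / 2)]
  have eb : Real.cos b = 1 - 2 * Real.sin (b / 2) ^ 2 := by
    have h := Real.cos_two_mul (b / 2)
    rw [show 2 * (b / 2) = b by ring] at h
    linarith [Real.sin_sq_add_cos_sq (b / 2)]
  have esa : Real.sin a = 2 * Real.sin (a / 2) * Real.cos (a / 2) := by
    rw [← Real.sin_two_mul]; ring_nf
  have esb : Real.sin b = 2 * Real.sin (b / 2) * Real.cos (b / 2) := by
    rw [← Real.sin_two_mul]; ring_nf
  have ecab : Real.cos ((a + b) / 2) =
      Real.cos (a / 2) * Real.cos (b / 2) - Real.sin (a / 2) * Real.sin (b / 2) := by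
    rw [show (a + b) / 2 = a / 2 + b / 2 by ring, Real.cos_add]
  have hkey : Real.sin (a / 2) * Real.sin (b / 2) *
      (Real.cos (a / 2) * Real.cos (b / 2) - Real.sin (a / 2) * Real.sin (b / 2)) ≥ 0 := by
    rw [← ecab]; exact mul_nonneg (mul_nonneg hs1 hs2) hc
  rw [Real.cos_add, ea, eb, esa, esb]
  nlinarith [hkey]

theorem cos_chord_bound (n : ℕ) (hn : 2 ≤ n) (j : ℕ) (hj1 : 1 ≤ j) (hjn : j ≤ n) :
    Real.cos (j * Real.pi / n) ≤ 1 - (j : ℝ) * (1 - Real.cos (Real.pi / n)) := by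
  have hn0 : (0 : ℝ) < n := by positivity
  induction j with
  | zero => simp
  | succ k ih =>
    rcases Nat.eq_zero_or_pos k with hk | hk
    · subst hk
      simp
    · have hkn : k ≤ n := le_of_lt (Nat.lt_of_lt_of_le (Nat.lt_succ_self k) hjn)
      have ihk := ih hk hkn
      have key : Real.cos ((k : ℝ) * Real.pi / n + Real.pi / n) ≤
          Real.cos ((k : ℝ) * Real.pi / n) + Real.cos (Real.pi / n) - 1 := by
        apply cos_add_le_key
        · positivity
        · positivity
        · have hk1 : ((k : ℝ) + 1) ≤ n := by exact_mod_cast hjn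
          rw [← add_div]
          rw [div_le_iff₀ hn0]
          nlinarith [Real.pi_pos]
      have : ((k + 1 : ℕ) : ℝ) * Real.pi / n = (k : ℝ) * Real.pi / n + Real.pi / n := by
        push_cast; ring
      rw [this]
      push_cast
      linarith
end

section
/- For a positive integer n, define f_i : S_n → ℝ for 1 ≤ i ≤ n by f_i(σ) = cos(π(σ^{-1}(i) − 1/2)/n). Then Σ_{σ ∈ S_n} f_i(σ)² = n!/2 for each i, and Σ_{σ ∈ S_n} f_i(σ)·f_j(σ) = −n!/(2(n−1)) for i ≠ j (with n ≥ 2). -/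
open Finset Equiv Real

/-- `f_i(σ) = cos(π(σ⁻¹(i) − 1/2)/n)`, where positions are numbered `1, …, n`. -/
noncomputable def permEig (n : ℕ) (i : Fin n) (σ : Equiv.Perm (Fin n)) : ℝ :=
  Real.cos (Real.pi * (((σ⁻¹ i : Fin n) : ℕ) + 1 - 1 / 2) / n)

/-- Sum of the cosines `cos (π(k+1/2)/n)` vanishes (pairing `k ↔ n-1-k`). -/
lemma aux_cos_sum_zero (n : ℕ) (hn : n ≠ 0) :
    ∑ k : Fin n, Real.cos (Real.pi * (((k : ℕ) : ℝ) + 1 - 1 / 2) / n) = 0 := by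
  have key : ∀ k : Fin n,
      Real.cos (Real.pi * (((k.rev : ℕ) : ℝ) + 1 - 1 / 2) / n)
        = - Real.cos (Real.pi * (((k : ℕ) : ℝ) + 1 - 1 / 2) / n) := by
    intro k
    have hk : ((k.rev : ℕ) : ℝ) = (n : ℝ) - ((k : ℕ) : ℝ) - 1 := by
      rw [Fin.val_rev]
      have h1 : (k : ℕ) + 1 ≤ n := k.2
      push_cast [Nat.cast_sub h1]
      ring
    have hn' : (n : ℝ) ≠ 0 := Nat.cast_ne_zero.2 hn
    have harg : Real.pi * (((k.rev : ℕ) : ℝ) + 1 - 1 / 2) / n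
        = Real.pi - Real.pi * (((k : ℕ) : ℝ) + 1 - 1 / 2) / n := by
      rw [hk]; field_simp; ring
    rw [harg, Real.cos_pi_sub]
  have h2 : ∑ k : Fin n, Real.cos (Real.pi * (((k : ℕ) : ℝ) + 1 - 1 / 2) / n)
      = ∑ k : Fin n, Real.cos (Real.pi * (((k.rev : ℕ) : ℝ) + 1 - 1 / 2) / n) := by
    exact (Equiv.sum_comp Fin.revPerm
      (fun k : Fin n => Real.cos (Real.pi * (((k : ℕ) : ℝ) + 1 - 1 / 2) / n))).symm
  have h3 : ∑ k : Fin n, Real.cos (Real.pi * (((k : ℕ) : ℝ) + 1 - 1 / 2) / n)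
      = - ∑ k : Fin n, Real.cos (Real.pi * (((k : ℕ) : ℝ) + 1 - 1 / 2) / n) := by
    nth_rewrite 1 [h2]
    rw [← Finset.sum_neg_distrib]
    exact Finset.sum_congr rfl fun k _ => key k
  linarith

/-- Sum of `cos ((2k+1)π/n)` over `k < n` vanishes (geometric sum of roots of unity). -/
lemma aux_cos_double_sum_zero (n : ℕ) (hn : 2 ≤ n) :
    ∑ k : Fin n, Real.cos (Real.pi * (2 * ((k : ℕ) : ℝ) + 1) / n) = 0 := by
  have hn0 : (n : ℂ) ≠ 0 := by
    exact_mod_cast Nat.cast_ne_zero.2 (by omega)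
  set r : ℂ := Complex.exp (2 * Real.pi * Complex.I / n) with hr
  have hrn : r ^ n = 1 := by
    rw [hr, ← Complex.exp_nat_mul]
    have : (n : ℂ) * (2 * Real.pi * Complex.I / n) = 2 * Real.pi * Complex.I := by
      field_simp
    rw [this, Complex.exp_two_pi_mul_I]
  have hr1 : r ≠ 1 := by
    intro h
    rw [hr, Complex.exp_eq_one_iff] at h
    obtain ⟨m, hm⟩ := h
    have hpi : (2 * Real.pi * Complex.I) ≠ 0 := by
      simp [Complex.I_ne_zero, Real.pi_ne_zero]
    field_simp at hm
    have h2 : ((m : ℂ) * n - 1) * (2 * (Real.pi : ℂ) * Complex.I) = 0 := by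
      linear_combination (-(2 * (Real.pi : ℂ) * Complex.I)) * hm
    rcases mul_eq_zero.1 h2 with h3 | h3
    · have h4 : (m : ℂ) * n = 1 := by linear_combination h3
      have hint : m * (n : ℤ) = 1 := by exact_mod_cast h4
      have hdvd : (n : ℤ) ∣ 1 := Dvd.intro_left m hint
      have := Int.le_of_dvd (by norm_num) hdvd
      omega
    · exact hpi h3
  have hterm : ∀ k : Fin n,
      Complex.exp (((Real.pi * (2 * ((k : ℕ) : ℝ) + 1) / n : ℝ) : ℂ) * Complex.I)
        = Complex.exp (Real.pi * Complex.I / n) * r ^ (k : ℕ) := by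
    intro k
    rw [hr, ← Complex.exp_nat_mul, ← Complex.exp_add]
    congr 1
    push_cast
    field_simp
    ring
  have hsum : ∑ k : Fin n,
      Complex.exp (((Real.pi * (2 * ((k : ℕ) : ℝ) + 1) / n : ℝ) : ℂ) * Complex.I) = 0 := by
    simp only [hterm]
    rw [← Finset.mul_sum]
    have : ∑ k : Fin n, r ^ (k : ℕ) = ∑ k ∈ Finset.range n, r ^ k :=
      Fin.sum_univ_eq_sum_range _ n
    rw [this, geom_sum_eq hr1, hrn]
    simp
  calc ∑ k : Fin n, Real.cos (Real.pi * (2 * ((k : ℕ) : ℝ) + 1) / n)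
      = ∑ k : Fin n, (Complex.exp
          (((Real.pi * (2 * ((k : ℕ) : ℝ) + 1) / n : ℝ) : ℂ) * Complex.I)).re :=
        Finset.sum_congr rfl fun k _ => (Complex.exp_ofReal_mul_I_re _).symm
    _ = (∑ k : Fin n, Complex.exp
          (((Real.pi * (2 * ((k : ℕ) : ℝ) + 1) / n : ℝ) : ℂ) * Complex.I)).re :=
        (Complex.re_sum _ _).symm
    _ = 0 := by rw [hsum]; rfl

/-- Sum of squared cosines equals `n/2`. -/
lemma aux_cos_sq_sum (n : ℕ) (hn : 2 ≤ n) :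
    ∑ k : Fin n, Real.cos (Real.pi * (((k : ℕ) : ℝ) + 1 - 1 / 2) / n) ^ 2
      = (n : ℝ) / 2 := by
  have key : ∀ k : Fin n,
      Real.cos (Real.pi * (((k : ℕ) : ℝ) + 1 - 1 / 2) / n) ^ 2
        = 1 / 2 + Real.cos (Real.pi * (2 * ((k : ℕ) : ℝ) + 1) / n) / 2 := by
    intro k
    rw [Real.cos_sq]
    congr 2
    ring
  simp only [key]
  have h2 : ∑ k : Fin n, Real.cos (Real.pi * (2 * ((k : ℕ) : ℝ) + 1) / n) / 2 = 0 := by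
    rw [← Finset.sum_div, aux_cos_double_sum_zero n hn]
    norm_num
  rw [Finset.sum_add_distrib, h2, add_zero, Finset.sum_const, Finset.card_univ,
    Fintype.card_fin, nsmul_eq_mul]
  ring

/-- Summing `F (σ 0)` over all permutations. -/
lemma aux_sum_perm_zero {N : ℕ} (F : Fin (N + 1) → ℝ) :
    ∑ σ : Equiv.Perm (Fin (N + 1)), F (σ 0) = N.factorial * ∑ k, F k := by
  rw [← Equiv.sum_comp Equiv.Perm.decomposeFin.symm
    (fun σ : Equiv.Perm (Fin (N + 1)) => F (σ 0))]
  rw [Fintype.sum_prod_type]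
  simp only [Equiv.Perm.decomposeFin_symm_apply_zero, Finset.sum_const,
    Finset.card_univ, Fintype.card_perm, Fintype.card_fin, nsmul_eq_mul]
  rw [← Finset.mul_sum]

/-- Summing `F (σ 0) * G (σ 1)` over all permutations. -/
lemma aux_sum_perm_pair {M : ℕ} (F G : Fin (M + 2) → ℝ) :
    ∑ σ : Equiv.Perm (Fin (M + 2)), F (σ 0) * G (σ 1)
      = M.factorial * ((∑ k, F k) * (∑ k, G k) - ∑ k, F k * G k) := by
  rw [← Equiv.sum_comp Equiv.Perm.decomposeFin.symm
    (fun σ : Equiv.Perm (Fin (M + 2)) => F (σ 0) * G (σ 1))]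
  rw [Fintype.sum_prod_type]
  have hone : (1 : Fin (M + 2)) = (0 : Fin (M + 1)).succ := rfl
  have happ : ∀ (k : Fin (M + 2)) (τ : Equiv.Perm (Fin (M + 1))),
      (Equiv.Perm.decomposeFin.symm (k, τ)) 1 = Equiv.swap 0 k ((τ 0).succ) := by
    intro k τ
    rw [hone, Equiv.Perm.decomposeFin_symm_apply_succ]
  have hinner : ∀ k : Fin (M + 2),
      ∑ τ : Equiv.Perm (Fin (M + 1)),
        F ((Equiv.Perm.decomposeFin.symm (k, τ)) 0)
          * G ((Equiv.Perm.decomposeFin.symm (k, τ)) 1)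
      = F k * (M.factorial * ((∑ x, G x) - G k)) := by
    intro k
    simp only [Equiv.Perm.decomposeFin_symm_apply_zero, happ]
    rw [← Finset.mul_sum]
    congr 1
    rw [aux_sum_perm_zero (fun t : Fin (M + 1) => G (Equiv.swap 0 k t.succ))]
    congr 1
    have h1 : ∑ x : Fin (M + 2), G (Equiv.swap 0 k x)
        = G (Equiv.swap 0 k 0) + ∑ t : Fin (M + 1), G (Equiv.swap 0 k t.succ) :=
      Fin.sum_univ_succ (fun x => G (Equiv.swap 0 k x))
    have h2 : ∑ x : Fin (M + 2), G (Equiv.swap 0 k x) = ∑ x, G x :=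
      Equiv.sum_comp (Equiv.swap 0 k) G
    rw [h2, Equiv.swap_apply_left] at h1
    linarith
  calc ∑ k : Fin (M + 2), ∑ τ : Equiv.Perm (Fin (M + 1)),
        F ((Equiv.Perm.decomposeFin.symm (k, τ)) 0)
          * G ((Equiv.Perm.decomposeFin.symm (k, τ)) 1)
      = ∑ k : Fin (M + 2), F k * (M.factorial * ((∑ x, G x) - G k)) :=
        Finset.sum_congr rfl fun k _ => hinner k
    _ = M.factorial * ((∑ k, F k) * (∑ k, G k) - ∑ k, F k * G k) := by
        have hk : ∀ k : Fin (M + 2),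
            F k * ((M.factorial : ℝ) * ((∑ x, G x) - G k))
              = (M.factorial : ℝ) * (F k * ∑ x, G x) - (M.factorial : ℝ) * (F k * G k) := by
          intro k; ring
        simp_rw [hk]
        rw [Finset.sum_sub_distrib, ← Finset.mul_sum, ← Finset.mul_sum, ← Finset.sum_mul]
        ring

theorem permEig_inner_products (n : ℕ) (hn : 2 ≤ n) :
    (∀ i : Fin n, ∑ σ : Equiv.Perm (Fin n), permEig n i σ ^ 2 = (n.factorial : ℝ) / 2) ∧
    ∀ i j : Fin n, i ≠ j →
      ∑ σ : Equiv.Perm (Fin n), permEig n i σ * permEig n j σ =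
        -(n.factorial : ℝ) / (2 * ((n : ℝ) - 1)) := by
  obtain ⟨M, rfl⟩ : ∃ M, n = M + 2 := ⟨n - 2, by omega⟩
  set g : Fin (M + 2) → ℝ :=
    fun k => Real.cos (Real.pi * (((k : ℕ) : ℝ) + 1 - 1 / 2) / (M + 2 : ℕ)) with hg
  have hpe : ∀ (i : Fin (M + 2)) (σ : Equiv.Perm (Fin (M + 2))),
      permEig (M + 2) i σ = g (σ⁻¹ i) := fun i σ => rfl
  have hsum0 : ∑ k, g k = 0 := aux_cos_sum_zero (M + 2) (by omega)
  have hsum2 : ∑ k, g k ^ 2 = ((M + 2 : ℕ) : ℝ) / 2 := aux_cos_sq_sum (M + 2) hn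
  have hinv : ∀ Φ : Equiv.Perm (Fin (M + 2)) → ℝ,
      ∑ σ : Equiv.Perm (Fin (M + 2)), Φ σ⁻¹ = ∑ σ, Φ σ := fun Φ =>
    Equiv.sum_comp (Equiv.inv (Equiv.Perm (Fin (M + 2)))) Φ
  have hmul : ∀ (q : Equiv.Perm (Fin (M + 2))) (Φ : Equiv.Perm (Fin (M + 2)) → ℝ),
      ∑ σ : Equiv.Perm (Fin (M + 2)), Φ (σ * q) = ∑ σ, Φ σ := fun q Φ =>
    Equiv.sum_comp (Equiv.mulRight q) Φ
  constructor
  · intro i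
    simp only [hpe]
    rw [hinv (fun σ => g (σ i) ^ 2)]
    have h1 : ∑ σ : Equiv.Perm (Fin (M + 2)), g (σ i) ^ 2
        = ∑ σ : Equiv.Perm (Fin (M + 2)), g (σ 0) ^ 2 := by
      rw [← hmul (Equiv.swap 0 i) (fun σ => g (σ i) ^ 2)]
      apply Finset.sum_congr rfl
      intro σ _
      simp [Equiv.Perm.mul_apply, Equiv.swap_apply_right]
    rw [h1, aux_sum_perm_zero (fun k => g k ^ 2), hsum2]
    have : ((M + 2).factorial : ℝ) = (M + 2) * ((M + 1).factorial : ℝ) := by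
      rw [show M + 2 = (M + 1) + 1 from rfl, Nat.factorial_succ]
      push_cast; ring
    rw [this]
    push_cast
    ring
  · intro i j hij
    simp only [hpe]
    rw [hinv (fun σ => g (σ i) * g (σ j))]
    -- build π with π i = 0 and π j = 1
    set j₁ : Fin (M + 2) := Equiv.swap 0 i j with hj₁
    have hj₁0 : j₁ ≠ 0 := by
      simp only [hj₁, Ne, Equiv.swap_apply_eq_iff, Equiv.swap_apply_left]
      exact hij.symm
    set p : Equiv.Perm (Fin (M + 2)) := Equiv.swap 1 j₁ * Equiv.swap 0 i with hp
    have hpi : p i = 0 := by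
      simp only [hp, Equiv.Perm.mul_apply, Equiv.swap_apply_right]
      rw [Equiv.swap_apply_of_ne_of_ne (by simp : (0 : Fin (M + 2)) ≠ 1) hj₁0.symm]
    have hpj : p j = 1 := by
      simp only [hp, Equiv.Perm.mul_apply, ← hj₁, Equiv.swap_apply_left, Equiv.swap_apply_right]
    have h1 : ∑ σ : Equiv.Perm (Fin (M + 2)), g (σ i) * g (σ j)
        = ∑ σ : Equiv.Perm (Fin (M + 2)), g (σ 0) * g (σ 1) := by
      rw [← hmul p (fun σ => g (σ i) * g (σ j))]
      apply Finset.sum_congr rfl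
      intro σ _
      have e1 : (σ * p) i = σ 0 := by
        rw [Equiv.Perm.mul_apply, hpi]
      have e2 : (σ * p) j = σ 1 := by
        rw [Equiv.Perm.mul_apply, hpj]
      rw [e1, e2]
    rw [h1, aux_sum_perm_pair g g, hsum0]
    have hgg : ∑ k, g k * g k = ((M + 2 : ℕ) : ℝ) / 2 := by
      rw [← hsum2]
      exact Finset.sum_congr rfl fun k _ => (pow_two (g k)).symm
    rw [hgg]
    have hfac : ((M + 2).factorial : ℝ)
        = (M + 2) * (M + 1) * (M.factorial : ℝ) := by
      rw [show M + 2 = (M + 1) + 1 from rfl, Nat.factorial_succ, Nat.factorial_succ]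
      push_cast; ring
    rw [hfac]
    push_cast
    have hd : (2 : ℝ) * ((M : ℝ) + 2 - 1) = 2 * ((M : ℝ) + 1) := by ring
    rw [hd, eq_div_iff (by positivity : (2 * ((M : ℝ) + 1)) ≠ 0)]
    ring
end

section
/- Let P be the transition matrix of a reversible, irreducible, aperiodic Markov chain on a finite state space equipped with a partial order having minimum 0̂ and maximum 1̂, admitting a monotone grand coupling. Suppose Φ is a strictly increasing real function on the state space such that whenever X ⪯ Y, the coupled one-step evolution satisfies E[Φ(Y′) − Φ(X′) | X, Y] ≤ (1−γ)(Φ(Y)−Φ(X)) for some 0 < γ < 1. Then every eigenvalue λ of P other than 1 satisfies λ ≤ 1−γ; i.e., the spectral gap of P is at least γ. -/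
open MeasureTheory
open scoped ENNReal

/-- A set whose outer measure and that of its complement add up to at most the total
mass in a probability space is a.e. equal to a measurable set. -/
lemma aux_ae_meas {Ω : Type*} [MeasurableSpace Ω] (μ : Measure Ω) [IsProbabilityMeasure μ]
    {A : Set Ω} (h : (μ A).toReal + (μ Aᶜ).toReal ≤ 1) :
    ∃ t : Set Ω, MeasurableSet t ∧ A =ᵐ[μ] t ∧ μ t = μ A := by
  set t := toMeasurable μ A with ht
  set t' := toMeasurable μ Aᶜ with ht'
  have hAt : A ⊆ t := subset_toMeasurable μ A
  have hAt' : Aᶜ ⊆ t' := subset_toMeasurable μ Aᶜ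
  have hmt : MeasurableSet t := measurableSet_toMeasurable μ A
  have hmt' : MeasurableSet t' := measurableSet_toMeasurable μ Aᶜ
  have hμt : μ t = μ A := measure_toMeasurable A
  have hμt' : μ t' = μ Aᶜ := measure_toMeasurable Aᶜ
  have hfin : μ A ≠ ⊤ := (measure_lt_top μ A).ne
  have hfin' : μ Aᶜ ≠ ⊤ := (measure_lt_top μ Aᶜ).ne
  have hsum : μ t + μ t' ≤ 1 := by
    rw [hμt, hμt']
    have : ((μ A + μ Aᶜ)).toReal ≤ 1 := by
      rw [ENNReal.toReal_add hfin hfin']; exact h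
    have hne : μ A + μ Aᶜ ≠ ⊤ := by
      simp [ENNReal.add_eq_top, hfin, hfin']
    calc μ A + μ Aᶜ = ENNReal.ofReal ((μ A + μ Aᶜ).toReal) := (ENNReal.ofReal_toReal hne).symm
    _ ≤ ENNReal.ofReal 1 := ENNReal.ofReal_le_ofReal this
    _ = 1 := by simp
  have huniv : t ∪ t' = Set.univ := by
    apply Set.eq_univ_of_univ_subset
    intro x _
    by_cases hx : x ∈ A
    · exact Or.inl (hAt hx)
    · exact Or.inr (hAt' hx)
  have hinter : μ (t ∩ t') = 0 := by
    have hkey : μ (t ∪ t') + μ (t ∩ t') = μ t + μ t' :=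
      measure_union_add_inter t hmt'
    rw [huniv] at hkey
    have : (1 : ℝ≥0∞) + μ (t ∩ t') ≤ 1 + 0 := by
      rw [add_zero]
      calc (1:ℝ≥0∞) + μ (t ∩ t') = μ (Set.univ : Set Ω) + μ (t ∩ t') := by simp
      _ = μ t + μ t' := hkey
      _ ≤ 1 := hsum
    have := (ENNReal.add_le_add_iff_left (by norm_num : (1:ℝ≥0∞) ≠ ⊤)).mp this
    exact le_antisymm this zero_le
  refine ⟨t, hmt, ?_, hμt⟩
  have hdiff : μ (t \ A) = 0 := by
    apply measure_mono_null _ hinter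
    intro x hx
    exact ⟨hx.1, hAt' hx.2⟩
  have hdiff' : μ (A \ t) = 0 := by
    apply measure_mono_null _ (measure_empty (μ := μ))
    intro x hx; exact absurd (hAt hx.1) hx.2
  exact (MeasureTheory.ae_le_set.mpr hdiff').antisymm (MeasureTheory.ae_le_set.mpr hdiff)

/-- Expectation of `g` of a finite-valued random variable whose distribution (via outer
measure) is `p`. -/
lemma aux_integral_comp {α Ω : Type*} [Fintype α] [DecidableEq α] [MeasurableSpace Ω]
    (μ : Measure Ω) [IsProbabilityMeasure μ] (T : Ω → α) (p : α → ℝ)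
    (hp : ∀ z, (μ {ω | T ω = z}).toReal = p z)
    (hp1 : ∑ z, p z = 1) (g : α → ℝ) :
    Integrable (fun ω => g (T ω)) μ ∧ ∫ ω, g (T ω) ∂μ = ∑ z, p z * g z := by
  classical
  set A : α → Set Ω := fun z => {ω | T ω = z} with hA
  -- each A z is a.e. measurable
  have hmeas : ∀ z, ∃ t : Set Ω, MeasurableSet t ∧ A z =ᵐ[μ] t ∧ μ t = μ (A z) := by
    intro z
    apply aux_ae_meas
    have hcompl : (A z)ᶜ ⊆ ⋃ w ∈ Finset.univ.erase z, A w := by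
      intro ω hω
      simp only [Set.mem_iUnion]
      refine ⟨T ω, ?_, rfl⟩
      simp only [Finset.mem_erase, Finset.mem_univ, and_true]
      intro h
      exact hω (by simp [A, h])
    have h1 : μ ((A z)ᶜ) ≤ ∑ w ∈ Finset.univ.erase z, μ (A w) :=
      le_trans (measure_mono hcompl) (measure_biUnion_finset_le _ _)
    have h2 : (μ ((A z)ᶜ)).toReal ≤ ∑ w ∈ Finset.univ.erase z, (μ (A w)).toReal := by
      calc (μ ((A z)ᶜ)).toReal ≤ (∑ w ∈ Finset.univ.erase z, μ (A w)).toReal :=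
            ENNReal.toReal_mono (by
              rw [← lt_top_iff_ne_top]
              exact ENNReal.sum_lt_top.mpr fun w _ => measure_lt_top μ _) h1
        _ = ∑ w ∈ Finset.univ.erase z, (μ (A w)).toReal :=
            ENNReal.toReal_sum fun w _ => (measure_lt_top μ _).ne
    have h3 : ∑ w ∈ Finset.univ.erase z, (μ (A w)).toReal = 1 - p z := by
      have : ∑ w ∈ Finset.univ.erase z, (μ (A w)).toReal
          = ∑ w ∈ Finset.univ.erase z, p w := Finset.sum_congr rfl fun w _ => hp w
      rw [this, ← hp1]
      rw [← Finset.sum_erase_add Finset.univ p (Finset.mem_univ z)]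
      ring
    have := h2.trans_eq h3
    rw [hp z]
    linarith
  choose t hmt hae hμt using hmeas
  -- the composition agrees a.e. with a simple measurable function
  have haeall : ∀ᵐ ω ∂μ, ∀ z, (ω ∈ A z ↔ ω ∈ t z) := by
    rw [MeasureTheory.ae_all_iff]
    intro z
    exact Filter.eventuallyEq_set.mp (hae z)
  have hsimple : (fun ω => g (T ω)) =ᵐ[μ]
      (fun ω => ∑ z, Set.indicator (t z) (fun _ => g z) ω) := by
    filter_upwards [haeall] with ω hω
    have : ∀ z, Set.indicator (t z) (fun _ => g z) ω = if T ω = z then g z else 0 := by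
      intro z
      rw [Set.indicator_apply]
      congr 1
      simp only [eq_iff_iff]
      exact ((hω z).symm.trans (by simp [A]))
    simp only [this]
    rw [Finset.sum_ite_eq Finset.univ (T ω) g]
    simp
  have hint : ∀ z, Integrable (Set.indicator (t z) (fun _ => g z)) μ :=
    fun z => (integrable_const (g z)).indicator (hmt z)
  have hintsum : Integrable (fun ω => ∑ z, Set.indicator (t z) (fun _ => g z) ω) μ :=
    integrable_finset_sum _ fun z _ => hint z
  constructor
  · exact hintsum.congr hsimple.symm
  · rw [integral_congr_ae hsimple, integral_finset_sum _ fun z _ => hint z]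
    apply Finset.sum_congr rfl
    intro z _
    rw [integral_indicator_const (g z) (hmt z), measureReal_def, hμt z, hp z, smul_eq_mul, mul_comm]

lemma aux_core
    {α : Type*} [Fintype α] [DecidableEq α] [PartialOrder α]
    (P : Matrix α α ℝ)
    {Ω : Type*} [mΩ : MeasurableSpace Ω] (μ : Measure Ω) [IsProbabilityMeasure μ]
    (F : Ω → α → α)
    (hFmarg : ∀ x y, (μ {ω | F ω x = y}).toReal = P x y)
    (hFmono : ∀ ω, Monotone (F ω))
    (hP1 : ∀ x, ∑ y, P x y = 1)
    (Φ : α → ℝ) (hΦ : StrictMono Φ)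
    (γ : ℝ)
    (hcontr : ∀ x y, x ≤ y →
      ∫ ω, (Φ (F ω y) - Φ (F ω x)) ∂μ ≤ (1 - γ) * (Φ y - Φ x))
    (lam : ℝ) (w : α → ℝ) (hw : P.mulVec w = lam • w)
    (hex : ∃ a b : α, a < b ∧ w a < w b) : lam ≤ 1 - γ := by
  classical
  obtain ⟨a, b, hab, hwab⟩ := hex
  -- the maximizing comparable pair
  set s : Finset (α × α) := Finset.univ.filter (fun q => q.1 < q.2) with hs
  have hsne : s.Nonempty := ⟨(a, b), by simp [s, hab]⟩
  set r : α × α → ℝ := fun q => (w q.2 - w q.1) / (Φ q.2 - Φ q.1) with hr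
  obtain ⟨q₀, hq₀s, hq₀max⟩ := s.exists_max_image r hsne
  obtain ⟨a₀, b₀⟩ := q₀
  have hab₀ : a₀ < b₀ := by simpa [s] using hq₀s
  set M : ℝ := r (a₀, b₀) with hM
  have hD : 0 < Φ b₀ - Φ a₀ := sub_pos.mpr (hΦ hab₀)
  have hMpos : 0 < M := by
    have h1 : 0 < r (a, b) := div_pos (sub_pos.mpr hwab) (sub_pos.mpr (hΦ hab))
    exact lt_of_lt_of_le h1 (hq₀max (a, b) (by simp [s, hab]))
  -- pointwise Lipschitz bound
  have hlip : ∀ u u' : α, u ≤ u' → w u' - w u ≤ M * (Φ u' - Φ u) := by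
    intro u u' huu
    rcases eq_or_lt_of_le huu with h | h
    · subst h; simp
    · have hd : 0 < Φ u' - Φ u := sub_pos.mpr (hΦ h)
      have : r (u, u') ≤ M := hq₀max (u, u') (by simp [s, h])
      calc w u' - w u = r (u, u') * (Φ u' - Φ u) := by
            rw [hr]; field_simp
        _ ≤ M * (Φ u' - Φ u) := mul_le_mul_of_nonneg_right this hd.le
  -- expectations via the marginal lemma
  have hExp : ∀ (x : α) (g : α → ℝ), Integrable (fun ω => g (F ω x)) μ ∧
      ∫ ω, g (F ω x) ∂μ = ∑ z, P x z * g z := by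
    intro x g
    exact aux_integral_comp μ (fun ω => F ω x) (P x) (fun z => hFmarg x z) (hP1 x) g
  have hIa : Integrable (fun ω => w (F ω a₀)) μ := (hExp a₀ w).1
  have hIb : Integrable (fun ω => w (F ω b₀)) μ := (hExp b₀ w).1
  have hIΦa : Integrable (fun ω => Φ (F ω a₀)) μ := (hExp a₀ Φ).1
  have hIΦb : Integrable (fun ω => Φ (F ω b₀)) μ := (hExp b₀ Φ).1
  have hmulVec : ∀ (x : α) (g : α → ℝ), ∑ z, P x z * g z = P.mulVec g x := by
    intro x g; simp [Matrix.mulVec, dotProduct]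
  -- the chain of inequalities
  have step1 : ∫ ω, (w (F ω b₀) - w (F ω a₀)) ∂μ = lam * (w b₀ - w a₀) := by
    rw [integral_sub hIb hIa, (hExp b₀ w).2, (hExp a₀ w).2, hmulVec, hmulVec, hw]
    simp [mul_sub]
  have step2 : ∫ ω, (w (F ω b₀) - w (F ω a₀)) ∂μ ≤
      ∫ ω, M * (Φ (F ω b₀) - Φ (F ω a₀)) ∂μ := by
    apply integral_mono (hIb.sub hIa) (((hIΦb.sub hIΦa)).const_mul M)
    intro ω
    exact hlip _ _ (hFmono ω hab₀.le)
  have step3 : ∫ ω, M * (Φ (F ω b₀) - Φ (F ω a₀)) ∂μ ≤ M * ((1 - γ) * (Φ b₀ - Φ a₀)) := by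
    rw [integral_const_mul]
    exact mul_le_mul_of_nonneg_left (hcontr a₀ b₀ hab₀.le) hMpos.le
  have hwM : w b₀ - w a₀ = M * (Φ b₀ - Φ a₀) := by
    rw [hM, hr]; field_simp
  have final : lam * (M * (Φ b₀ - Φ a₀)) ≤ (1 - γ) * (M * (Φ b₀ - Φ a₀)) := by
    calc lam * (M * (Φ b₀ - Φ a₀)) = lam * (w b₀ - w a₀) := by rw [hwM]
      _ ≤ M * ((1 - γ) * (Φ b₀ - Φ a₀)) := step1 ▸ (step2.trans step3)
      _ = (1 - γ) * (M * (Φ b₀ - Φ a₀)) := by ring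
  exact le_of_mul_le_mul_right (by simpa [mul_comm] using final) (mul_pos hMpos hD)


/-- If a reversible, irreducible, aperiodic finite Markov chain on a partially ordered
state space with bottom and top admits a monotone grand coupling under which a strictly
increasing function `Φ` contracts by a factor `1 − γ`, then every eigenvalue of the
transition matrix other than `1` is at most `1 − γ`. -/
theorem spectral_gap_from_monotone_contraction
    {α : Type*} [Fintype α] [MeasurableSpace α] [DecidableEq α] [PartialOrder α] [BoundedOrder α]
    (P : Matrix α α ℝ)
    -- `P` is a stochastic matrix
    (hP0 : ∀ x y, 0 ≤ P x y) (hP1 : ∀ x, ∑ y, P x y = 1)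
    -- irreducibility and aperiodicity (primitivity)
    (hprim : ∃ t : ℕ, ∀ x y, 0 < (P ^ t) x y)
    -- reversibility with respect to a positive stationary distribution
    (pi : α → ℝ) (hpipos : ∀ x, 0 < pi x) (hpi1 : ∑ x, pi x = 1)
    (hrev : ∀ x y, pi x * P x y = pi y * P y x)
    -- a monotone grand coupling with one-step marginals given by `P`
    {Ω : Type*} [mΩ : MeasurableSpace Ω] (μ : Measure Ω) [IsProbabilityMeasure μ]
    (F : Ω → α → α)
    (hFmeas : ∀ x, Measurable fun ω => F ω x)
    (hFmarg : ∀ x y, (μ {ω | F ω x = y}).toReal = P x y)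
    (hFmono : ∀ ω, Monotone (F ω))
    -- a strictly increasing function contracting at rate `1 − γ` under the coupling
    (Φ : α → ℝ) (hΦ : StrictMono Φ)
    (γ : ℝ) (hγ0 : 0 < γ) (hγ1 : γ < 1)
    (hcontr : ∀ x y, x ≤ y →
      ∫ ω, (Φ (F ω y) - Φ (F ω x)) ∂μ ≤ (1 - γ) * (Φ y - Φ x)) :
    ∀ lam : ℝ, (∃ v : α → ℝ, v ≠ 0 ∧ P.mulVec v = lam • v) → lam = 1 ∨ lam ≤ 1 - γ := by
  intro lam ⟨v, hv0, hv⟩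
  by_cases hlam : lam = 1
  · exact Or.inl hlam
  right
  -- v is not constant
  have hnc : ∃ x y : α, v x ≠ v y := by
    by_contra hc
    push_neg at hc
    apply hv0
    funext x
    have hx : P.mulVec v x = lam * v x := by rw [hv]; simp
    have hx2 : P.mulVec v x = v x := by
      simp only [Matrix.mulVec, dotProduct]
      calc ∑ z, P x z * v z = ∑ z, P x z * v x := by
            exact Finset.sum_congr rfl fun z _ => by rw [hc z x]
        _ = v x := by rw [← Finset.sum_mul, hP1 x, one_mul]
    have : (lam - 1) * v x = 0 := by rw [sub_mul, one_mul, ← hx, hx2]; ring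
    rcases mul_eq_zero.mp this with h | h
    · exact absurd (by linarith [sub_eq_zero.mp h] : lam = 1) hlam
    · exact h
  -- produce a comparable pair with distinct values
  obtain ⟨x, y, hxy⟩ := hnc
  have hcomp : ∃ a b : α, a < b ∧ v a ≠ v b := by
    by_cases hbx : v ⊥ = v x
    · refine ⟨⊥, y, ?_, by rw [hbx]; exact hxy⟩
      rcases eq_or_lt_of_le (bot_le : (⊥ : α) ≤ y) with h | h
      · exact absurd (hbx.symm.trans (congrArg v h)) hxy
      · exact h
    · refine ⟨⊥, x, ?_, hbx⟩
      rcases eq_or_lt_of_le (bot_le : (⊥ : α) ≤ x) with h | h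
      · exact absurd (h ▸ rfl) hbx
      · exact h
  obtain ⟨a, b, hab, hvab⟩ := hcomp
  rcases lt_or_gt_of_ne hvab with h | h
  · exact aux_core P μ F hFmarg hFmono hP1 Φ hΦ γ hcontr lam v hv ⟨a, b, hab, h⟩
  · have hneg : P.mulVec (-v) = lam • (-v) := by
      rw [Matrix.mulVec_neg, hv]; simp
    exact aux_core P μ F hFmarg hFmono hP1 Φ hΦ γ hcontr lam (-v) hneg
      ⟨a, b, hab, by simpa using h⟩
end
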